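/- arXiv:1911.07484 — 3 statements merged into one kernel-verified Lean document; each statement's English description precedes it below -/
import Mathlib

section
/- If p, q are points in ℝ^d, x and y are points of a finite set X ⊆ ℝ^d with q in the Voronoi cell of x (i.e., dist(q,x) ≤ dist(q,z) for all z ∈ X), and some point γ(s) = (1-s)p + sq with s ∈ [0,1) lies in the Voronoi cell of y, and dist(x,p) < t, then dist(y,p) < t. -/
open RealInnerProductSpace

/-- If `q` lies in the Voronoi cell of `x` and some point `(1-s)•p + s•q` with
`s ∈ [0,1)` lies in the Voronoi cell of `y`, and `dist x p < t`, then `dist y p < t`. -/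
theorem stmt_0 {d : ℕ} (X : Finset (EuclideanSpace ℝ (Fin d)))
    (x y p q : EuclideanSpace ℝ (Fin d)) (t : ℝ)
    (hx : x ∈ X) (hy : y ∈ X)
    (hq : ∀ z ∈ X, dist x q ≤ dist z q)
    (s : ℝ) (hs : s ∈ Set.Ico (0 : ℝ) 1)
    (hγ : ∀ z ∈ X, dist y ((1 - s) • p + s • q) ≤ dist z ((1 - s) • p + s • q))
    (hp : dist x p < t) :
    dist y p < t := by
  obtain ⟨hs0, hs1⟩ := hs
  set m := (1 - s) • p + s • q with hm
  have h1 : dist x q ≤ dist y q := hq y hy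
  have h2 : dist y m ≤ dist x m := hγ x hx
  have ep : ∀ z : EuclideanSpace ℝ (Fin d),
      dist z x ^ 2 - dist z y ^ 2 = 2 * ⟪z, y - x⟫ + (‖x‖ ^ 2 - ‖y‖ ^ 2) := by
    intro z
    rw [dist_eq_norm, dist_eq_norm, norm_sub_sq_real, norm_sub_sq_real, inner_sub_right]
    ring
  have hmq : ⟪m, y - x⟫ = (1 - s) * ⟪p, y - x⟫ + s * ⟪q, y - x⟫ := by
    rw [hm, inner_add_left, real_inner_smul_left, real_inner_smul_left]
  have eq1 := ep p
  have eq2 := ep q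
  have eq3 := ep m
  rw [hmq] at eq3
  have h1' : dist q x ^ 2 ≤ dist q y ^ 2 := by
    rw [dist_comm q x, dist_comm q y]
    exact pow_le_pow_left₀ dist_nonneg h1 2
  have h2' : dist m y ^ 2 ≤ dist m x ^ 2 := by
    rw [dist_comm m y, dist_comm m x]
    exact pow_le_pow_left₀ dist_nonneg h2 2
  have hpq : dist p y ^ 2 ≤ dist p x ^ 2 := by nlinarith
  have : dist p y ≤ dist p x := by
    nlinarith [dist_nonneg (x := p) (y := y), dist_nonneg (x := p) (y := x)]
  rw [dist_comm y p]
  rw [dist_comm x p] at hp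
  linarith
end

section
/- Let X ⊆ ℝ^d be finite and t > 0. Define T = {(p,q) ∈ ℝ^d × ℝ^d : ∃ x ∈ X, dist(x,p) < t and q ∈ Vor(X,x)}. Then for every (p,q) ∈ T and every s ∈ [0,1], the point (p, (1-s)p + sq) belongs to T. -/
open scoped RealInnerProductSpace

lemma aux_dist_le_iff {E : Type*} [NormedAddCommGroup E] [InnerProductSpace ℝ E]
    (y y' z : E) : dist y z ≤ dist y' z ↔
    ‖y‖^2 - 2*⟪y,z⟫ ≤ ‖y'‖^2 - 2*⟪y',z⟫ := by
  have h1 : dist y z ^ 2 = ‖y‖^2 - 2*⟪y,z⟫ + ‖z‖^2 := by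
    rw [dist_eq_norm, norm_sub_sq_real]
  have h2 : dist y' z ^ 2 = ‖y'‖^2 - 2*⟪y',z⟫ + ‖z‖^2 := by
    rw [dist_eq_norm, norm_sub_sq_real]
  constructor
  · intro h
    have := pow_le_pow_left₀ dist_nonneg h 2
    rw [h1, h2] at this; linarith
  · intro h
    have h3 : dist y z ^ 2 ≤ dist y' z ^ 2 := by rw [h1, h2]; linarith
    exact le_of_pow_le_pow_left₀ two_ne_zero dist_nonneg h3

/-- Line segment lemma: the `t`-thickening of the Delaunay–Čech dissimilarity is
star-shaped along the second coordinate toward the diagonal. -/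
theorem stmt_16 {d : ℕ} (X : Finset (EuclideanSpace ℝ (Fin d))) (t : ℝ) (ht : 0 < t)
    (T : Set (EuclideanSpace ℝ (Fin d) × EuclideanSpace ℝ (Fin d)))
    (hT : T = {pq | ∃ x ∈ X, dist x pq.1 < t ∧ ∀ y ∈ X, dist x pq.2 ≤ dist y pq.2}) :
    ∀ pq ∈ T, ∀ s ∈ Set.Icc (0 : ℝ) 1, (pq.1, (1 - s) • pq.1 + s • pq.2) ∈ T := by
  subst hT
  rintro ⟨p, q⟩ ⟨x, hxX, hxp, hvor⟩ s ⟨hs0, hs1⟩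
  rcases eq_or_lt_of_le hs1 with rfl | hs1
  · -- s = 1 : the midpoint is q itself
    refine ⟨x, hxX, hxp, ?_⟩
    intro y hy
    simpa using hvor y hy
  · -- s < 1 : take the nearest point of X to m
    set m : EuclideanSpace ℝ (Fin d) := (1 - s) • p + s • q with hm
    obtain ⟨x', hx'X, hx'min⟩ := X.exists_min_image (fun y => dist y m) ⟨x, hxX⟩
    refine ⟨x', hx'X, ?_, hx'min⟩
    -- show dist x' p < t via dist x' p ≤ dist x p
    have hmexp : ∀ y : EuclideanSpace ℝ (Fin d),
        ⟪y, m⟫ = (1 - s) * ⟪y, p⟫ + s * ⟪y, q⟫ := by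
      intro y
      rw [hm, inner_add_right, real_inner_smul_right, real_inner_smul_right]
    have h1 : ‖x'‖^2 - 2*⟪x',m⟫ ≤ ‖x‖^2 - 2*⟪x,m⟫ :=
      (aux_dist_le_iff x' x m).1 (hx'min x hxX)
    have h2 : ‖x‖^2 - 2*⟪x,q⟫ ≤ ‖x'‖^2 - 2*⟪x',q⟫ :=
      (aux_dist_le_iff x x' q).1 (hvor x' hx'X)
    have hsub : 0 < 1 - s := by linarith
    have h3 : ‖x'‖^2 - 2*⟪x',p⟫ ≤ ‖x‖^2 - 2*⟪x,p⟫ := by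
      rw [hmexp x', hmexp x] at h1
      nlinarith
    have h4 : dist x' p ≤ dist x p := (aux_dist_le_iff x' x p).2 h3
    linarith
end

section
/- Let X ⊆ ℝ^d be finite and t > 0, and let T = {(p,q) : ∃ x ∈ X, dist(x,p) < t and q ∈ Vor(X,x)}. Then the map H : T × [0,1] → T, H((p,q),s) = (p,(1-s)q + sp), is a deformation retraction of T onto the set {(p,p) : ∃ x ∈ X, dist(x,p) < t}, and hence T is homotopy equivalent to the union of open balls ⋃_{x∈X} B(x,t). -/
private lemma stmt17_key {E : Type*} [NormedAddCommGroup E] [InnerProductSpace ℝ E]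
    (x y p q : E) {s : ℝ} (hs : 0 < s) (hs1 : s ≤ 1)
    (h1 : dist x q ≤ dist y q)
    (h2 : dist y ((1-s)•q + s•p) ≤ dist x ((1-s)•q + s•p)) :
    dist y p ≤ dist x p := by
  have e : ∀ a b : E, dist a b ^ 2 = ‖a‖^2 - 2 * inner ℝ a b + ‖b‖^2 := by
    intro a b; rw [dist_eq_norm, @norm_sub_sq_real]
  have h1' : dist x q ^ 2 ≤ dist y q ^ 2 := pow_le_pow_left₀ dist_nonneg h1 2
  have h2' : dist y ((1-s)•q + s•p) ^ 2 ≤ dist x ((1-s)•q + s•p) ^ 2 :=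
    pow_le_pow_left₀ dist_nonneg h2 2
  rw [e, e] at h1' h2'
  rw [inner_add_right, inner_add_right, real_inner_smul_right, real_inner_smul_right,
    real_inner_smul_right, real_inner_smul_right] at h2'
  have goal2 : dist y p ^ 2 ≤ dist x p ^ 2 := by
    rw [e, e]
    nlinarith [mul_le_mul_of_nonneg_left h1' (by linarith : (0:ℝ) ≤ 1 - s)]
  exact (pow_le_pow_iff_left₀ dist_nonneg dist_nonneg two_ne_zero).mp goal2

/-- The homotopy `H((p,q),s) = (p, (1-s)q + sp)` is a deformation retraction of
`T = {(p,q) : ∃ x ∈ X, dist x p < t ∧ q ∈ Vor(X,x)}` onto the diagonal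
`{(p,p) : ∃ x ∈ X, dist x p < t}`, and hence `T` is homotopy equivalent to the union of
open balls `⋃_{x ∈ X} B(x,t)`. -/
theorem stmt_17 {d : ℕ} (X : Finset (EuclideanSpace ℝ (Fin d))) (t : ℝ) (ht : 0 < t)
    (T : Set (EuclideanSpace ℝ (Fin d) × EuclideanSpace ℝ (Fin d)))
    (hT : T = {pq | ∃ x ∈ X, dist x pq.1 < t ∧ ∀ y ∈ X, dist x pq.2 ≤ dist y pq.2})
    (D : Set (EuclideanSpace ℝ (Fin d) × EuclideanSpace ℝ (Fin d)))
    (hD : D = {pq | pq.1 = pq.2 ∧ ∃ x ∈ X, dist x pq.1 < t}) :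
    (∃ H : C(T × Set.Icc (0 : ℝ) 1, T),
      (∀ (a : T) (s : Set.Icc (0 : ℝ) 1),
        (H (a, s) : EuclideanSpace ℝ (Fin d) × EuclideanSpace ℝ (Fin d))
          = ((a : EuclideanSpace ℝ (Fin d) × EuclideanSpace ℝ (Fin d)).1,
            (1 - (s : ℝ)) • (a : EuclideanSpace ℝ (Fin d) × EuclideanSpace ℝ (Fin d)).2
              + (s : ℝ) • (a : EuclideanSpace ℝ (Fin d) × EuclideanSpace ℝ (Fin d)).1)) ∧
      (∀ a : T, H (a, 0) = a) ∧
      (∀ a : T, (H (a, 1) : EuclideanSpace ℝ (Fin d) × EuclideanSpace ℝ (Fin d)) ∈ D) ∧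
      (∀ (a : T) (s : Set.Icc (0 : ℝ) 1), (a : EuclideanSpace ℝ (Fin d) ×
        EuclideanSpace ℝ (Fin d)) ∈ D → H (a, s) = a)) ∧
    Nonempty (ContinuousMap.HomotopyEquiv T (⋃ x ∈ X, Metric.ball x t)) := by
  classical
  -- membership lemma: the segment point stays in T
  have memT : ∀ (p q : EuclideanSpace ℝ (Fin d)) (s : ℝ), 0 ≤ s → s ≤ 1 → (p, q) ∈ T →
      (p, (1-s)•q + s•p) ∈ T := by
    intro p q s hs0 hs1 hpq
    rw [hT] at hpq ⊢
    obtain ⟨x, hxX, hxp, hxq⟩ := hpq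
    rcases eq_or_lt_of_le hs0 with h0 | h0
    · refine ⟨x, hxX, hxp, ?_⟩
      intro y hy
      simpa [← h0] using hxq y hy
    · obtain ⟨y, hyX, hymin⟩ :=
        X.exists_min_image (fun z => dist z ((1-s)•q + s•p)) ⟨x, hxX⟩
      refine ⟨y, hyX, ?_, hymin⟩
      have := stmt17_key x y p q h0 hs1 (hxq y hyX) (hymin x hxX)
      exact lt_of_le_of_lt this hxp
  -- (p,p) ∈ T whenever p is within t of some point of X
  have memTdiag : ∀ p : EuclideanSpace ℝ (Fin d), (∃ x ∈ X, dist x p < t) → (p, p) ∈ T := by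
    intro p ⟨x, hxX, hxp⟩
    obtain ⟨y, hyX, hymin⟩ := X.exists_min_image (fun z => dist z p) ⟨x, hxX⟩
    rw [hT]
    exact ⟨y, hyX, lt_of_le_of_lt (hymin x hxX) hxp, hymin⟩
  -- the homotopy H
  have Hcont : Continuous (fun a : T × Set.Icc (0:ℝ) 1 =>
      ((a.1.val.1, (1 - a.2.val) • a.1.val.2 + a.2.val • a.1.val.1) :
        EuclideanSpace ℝ (Fin d) × EuclideanSpace ℝ (Fin d))) := by
    fun_prop
  let H : C(T × Set.Icc (0:ℝ) 1, T) :=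
    ⟨fun a => ⟨(a.1.val.1, (1 - a.2.val) • a.1.val.2 + a.2.val • a.1.val.1),
      memT _ _ _ a.2.2.1 a.2.2.2 (by simpa using a.1.2)⟩,
      Hcont.subtype_mk _⟩
  have Hformula : ∀ (a : T) (s : Set.Icc (0:ℝ) 1),
      (H (a, s) : EuclideanSpace ℝ (Fin d) × EuclideanSpace ℝ (Fin d))
        = (a.val.1, (1 - s.val) • a.val.2 + s.val • a.val.1) := by
    intro a s; rfl
  have H0 : ∀ a : T, H (a, 0) = a := by
    intro a
    apply Subtype.ext
    show (a.val.1, (1 - (0:ℝ)) • a.val.2 + (0:ℝ) • a.val.1) = a.val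
    simp
  have H1 : ∀ a : T, (H (a, 1) : EuclideanSpace ℝ (Fin d) × EuclideanSpace ℝ (Fin d)) ∈ D := by
    intro a
    have haT := (Set.ext_iff.mp hT _).mp a.2
    obtain ⟨x, hxX, hxp, -⟩ := haT
    rw [hD]
    refine ⟨?_, x, hxX, hxp⟩
    show a.val.1 = (1 - (1:ℝ)) • a.val.2 + (1:ℝ) • a.val.1
    simp
  have Hfix : ∀ (a : T) (s : Set.Icc (0:ℝ) 1),
      (a : EuclideanSpace ℝ (Fin d) × EuclideanSpace ℝ (Fin d)) ∈ D → H (a, s) = a := by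
    intro a s haD
    rw [hD] at haD
    apply Subtype.ext
    show (a.val.1, (1 - s.val) • a.val.2 + s.val • a.val.1) = a.val
    have h12 : a.val.1 = a.val.2 := haD.1
    rw [Prod.ext_iff]
    refine ⟨rfl, ?_⟩
    show (1 - s.val) • a.val.2 + s.val • a.val.1 = a.val.2
    rw [h12, ← add_smul]
    simp
  refine ⟨⟨H, Hformula, H0, H1, Hfix⟩, ?_⟩
  -- homotopy equivalence with the union of balls
  have memU : ∀ a : T, a.val.1 ∈ ⋃ x ∈ X, Metric.ball x t := by
    intro a
    have haT := (Set.ext_iff.mp hT _).mp a.2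
    obtain ⟨x, hxX, hxp, -⟩ := haT
    simp only [Set.mem_iUnion, Metric.mem_ball]
    exact ⟨x, hxX, by rwa [dist_comm]⟩
  have memT' : ∀ p : (⋃ x ∈ X, Metric.ball x t : Set (EuclideanSpace ℝ (Fin d))),
      ((p.val, p.val) : EuclideanSpace ℝ (Fin d) × EuclideanSpace ℝ (Fin d)) ∈ T := by
    intro p
    have hp := p.2
    simp only [Set.mem_iUnion, Metric.mem_ball] at hp
    obtain ⟨x, hxX, hxp⟩ := hp
    exact memTdiag p.val ⟨x, hxX, by rwa [dist_comm]⟩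
  let f : C(T, (⋃ x ∈ X, Metric.ball x t : Set (EuclideanSpace ℝ (Fin d)))) :=
    ⟨fun a => ⟨a.val.1, memU a⟩, Continuous.subtype_mk (by fun_prop) _⟩
  let g : C((⋃ x ∈ X, Metric.ball x t : Set (EuclideanSpace ℝ (Fin d))), T) :=
    ⟨fun p => ⟨(p.val, p.val), memT' p⟩, Continuous.subtype_mk (by fun_prop) _⟩
  have hfg : f.comp g = ContinuousMap.id _ := by
    ext p
    rfl
  have hHomotopy : (ContinuousMap.id T).Homotopy (g.comp f) := by
    refine
      { toFun := fun si => H (si.2, si.1)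
        continuous_toFun := H.continuous.comp (continuous_snd.prodMk continuous_fst)
        map_zero_left := fun a => H0 a
        map_one_left := fun a => ?_ }
    apply Subtype.ext
    show (a.val.1, (1 - (1:ℝ)) • a.val.2 + (1:ℝ) • a.val.1) = (a.val.1, a.val.1)
    simp
  exact ⟨⟨f, g, ⟨hHomotopy.symm⟩, hfg ▸ ContinuousMap.Homotopic.refl _⟩⟩
end
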